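/- arXiv:2312.01036 — 4 statements merged into one kernel-verified Lean document; each statement's English description precedes it below -/
import Mathlib

section
/- (Lemma 'Part 2' of the main theorem.) Let N ≥ 1, let G be a simple graph on Fin N, let g ≥ 0 be real, and let H = -∑_{{i,j} ∈ E_G} Z_iZ_j - g ∑_i X_i. Let ψ be a unit vector (⟨ψ, ψ⟩ = 1) such that for every i ∈ Fin N, either X_i ψ = ψ or Re⟨ψ, X_i ψ⟩ ≤ 0 (this hypothesis holds in particular for every stabilizer state). Let K = {i ∈ Fin N : X_i ψ = ψ} and V = (Fin N) \ K. Then Re⟨ψ, H ψ⟩ ≥ -|E(V)| - g·|K|, where E(V) is the set of edges of G with both endpoints in V. -/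
open scoped BigOperators Classical

noncomputable section

/-- Inner product on the `N`-qubit state space of functions `(Fin N → Fin 2) → ℂ`:
`⟨ψ, φ⟩ = ∑ x, conj (ψ x) * φ x`. -/
def qInner {N : ℕ} (ψ φ : (Fin N → Fin 2) → ℂ) : ℂ :=
  ∑ x : Fin N → Fin 2, (starRingEnd ℂ) (ψ x) * φ x

/-- The Pauli `X` operator on qubit `i`: `(X_i ψ)(x) = ψ(x with bit i flipped)`. -/
def pauliX {N : ℕ} (i : Fin N) (ψ : (Fin N → Fin 2) → ℂ) : (Fin N → Fin 2) → ℂ :=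
  fun x => ψ (Function.update x i (1 - x i))

/-- The operator `Z_i Z_j`: `(Z_iZ_j ψ)(x) = (-1)^(x i + x j) · ψ(x)`. -/
def pauliZZ {N : ℕ} (i j : Fin N) (ψ : (Fin N → Fin 2) → ℂ) : (Fin N → Fin 2) → ℂ :=
  fun x => (-1 : ℂ) ^ ((x i).val + (x j).val) * ψ x

/-- The edges of `G` with both endpoints in the vertex set `S` (edges of the induced subgraph). -/
def inducedEdges {α : Type*} [Fintype α] [DecidableEq α] (G : SimpleGraph α)
    [DecidableRel G.Adj] (S : Finset α) : Finset (Sym2 α) :=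
  G.edgeFinset.filter (fun e => ∀ v ∈ e, v ∈ S)

/-- The `Z_iZ_j` term of an edge `e = s(i,j)`, applied to `ψ` and evaluated at `x`. -/
def edgeZZ {N : ℕ} (ψ : (Fin N → Fin 2) → ℂ) (x : Fin N → Fin 2) : Sym2 (Fin N) → ℂ :=
  Sym2.lift ⟨fun i j => (-1 : ℂ) ^ ((x i).val + (x j).val) * ψ x,
    fun i j => by simp [Nat.add_comm]⟩

/-- The transverse-field Ising Hamiltonian `H = -∑_{{i,j} ∈ E_G} Z_iZ_j - g ∑_i X_i`. -/
def isingH {N : ℕ} (G : SimpleGraph (Fin N)) [DecidableRel G.Adj] (g : ℝ)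
    (ψ : (Fin N → Fin 2) → ℂ) : (Fin N → Fin 2) → ℂ :=
  fun x => -(∑ e ∈ G.edgeFinset, edgeZZ ψ x e) - (g : ℂ) * ∑ i : Fin N, pauliX i ψ x

def flipE {N : ℕ} (i : Fin N) : Equiv (Fin N → Fin 2) (Fin N → Fin 2) where
  toFun x := Function.update x i (1 - x i)
  invFun x := Function.update x i (1 - x i)
  left_inv x := by
    funext k
    by_cases h : k = i
    · subst h
      simp only [Function.update_self]
      have : ∀ a : Fin 2, 1 - (1 - a) = a := by decide
      exact this _
    · simp [Function.update_of_ne h]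
  right_inv x := by
    funext k
    by_cases h : k = i
    · subst h
      simp only [Function.update_self]
      have : ∀ a : Fin 2, 1 - (1 - a) = a := by decide
      exact this _
    · simp [Function.update_of_ne h]

lemma parity_flip {N : ℕ} (i j : Fin N) (hij : i ≠ j) (x : Fin N → Fin 2) :
    (-1 : ℂ) ^ (((flipE i x) i).val + ((flipE i x) j).val)
      = -(-1 : ℂ) ^ ((x i).val + (x j).val) := by
  have h1 : (flipE i x) i = 1 - x i := by simp [flipE]
  have h2 : (flipE i x) j = x j := by simp [flipE, Function.update_of_ne (Ne.symm hij)]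
  rw [h1, h2]
  have ha : x i = 0 ∨ x i = 1 := by omega
  rcases ha with h | h <;> rw [h] <;> norm_num [pow_succ, pow_add]

lemma edge_zero {N : ℕ} (ψ : (Fin N → Fin 2) → ℂ) (i j : Fin N) (hij : i ≠ j)
    (hψ : pauliX i ψ = ψ) :
    ∑ x : Fin N → Fin 2, (starRingEnd ℂ) (ψ x) * edgeZZ ψ x s(i, j) = 0 := by
  set S := ∑ x : Fin N → Fin 2, (starRingEnd ℂ) (ψ x) * edgeZZ ψ x s(i, j) with hS
  have hfix : ∀ x, ψ (flipE i x) = ψ x := fun x => congrFun hψ x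
  have hneg : S = -S := by
    rw [hS]
    nth_rewrite 1 [← Equiv.sum_comp (flipE i)
      (fun x => (starRingEnd ℂ) (ψ x) * edgeZZ ψ x s(i, j))]
    rw [← Finset.sum_neg_distrib]
    apply Finset.sum_congr rfl
    intro x _
    simp only [edgeZZ, Sym2.lift_mk, hfix, parity_flip i j hij x]
    ring
  linear_combination hneg / 2

/-- Lemma "Part 2": for a unit vector `ψ` such that each `X_i` either stabilizes `ψ` or has
nonpositive expectation, with `K = {i : X_i ψ = ψ}` and `V = (Fin N) \ K`, we have
`Re⟨ψ, H ψ⟩ ≥ -|E(V)| - g·|K|`. -/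
theorem stmt_6 {N : ℕ} (hN : 1 ≤ N) (G : SimpleGraph (Fin N)) [DecidableRel G.Adj]
    (g : ℝ) (hg : 0 ≤ g) (ψ : (Fin N → Fin 2) → ℂ) (hunit : qInner ψ ψ = 1)
    (hstab : ∀ i : Fin N, pauliX i ψ = ψ ∨ (qInner ψ (pauliX i ψ)).re ≤ 0) :
    -(((inducedEdges G
          (Finset.univ \ Finset.univ.filter (fun i : Fin N => pauliX i ψ = ψ))).card : ℝ))
        - g * ((Finset.univ.filter (fun i : Fin N => pauliX i ψ = ψ)).card : ℝ)
      ≤ (qInner ψ (isingH G g ψ)).re := by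
  classical
  set K : Finset (Fin N) := Finset.univ.filter (fun i : Fin N => pauliX i ψ = ψ) with hK
  set A : Sym2 (Fin N) → ℂ :=
    fun e => ∑ x : Fin N → Fin 2, (starRingEnd ℂ) (ψ x) * edgeZZ ψ x e with hA
  set B : Fin N → ℂ := fun i => qInner ψ (pauliX i ψ) with hB
  -- norm sum = 1
  have hnorm : ∑ x : Fin N → Fin 2, Complex.normSq (ψ x) = 1 := by
    have h1 : qInner ψ ψ = ((∑ x : Fin N → Fin 2, Complex.normSq (ψ x) : ℝ) : ℂ) := by
      unfold qInner
      push_cast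
      exact Finset.sum_congr rfl fun x _ => (Complex.normSq_eq_conj_mul_self).symm
    rw [hunit] at h1
    exact_mod_cast h1.symm
  -- key algebraic identity
  have key : qInner ψ (isingH G g ψ)
      = -(∑ e ∈ G.edgeFinset, A e) - (g : ℂ) * ∑ i : Fin N, B i := by
    unfold qInner isingH
    simp only [hA, hB, qInner, mul_sub, mul_neg, Finset.mul_sum,
      Finset.sum_sub_distrib, Finset.sum_neg_distrib]
    congr 1
    · rw [Finset.sum_comm]
    · rw [Finset.sum_comm]
      apply Finset.sum_congr rfl
      intro i _
      apply Finset.sum_congr rfl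
      intro x _
      ring
  -- bound on edge sums
  have hedge : ∑ e ∈ G.edgeFinset, (A e).re ≤ ((inducedEdges G (Finset.univ \ K)).card : ℝ) := by
    rw [← Finset.sum_filter_add_sum_filter_not G.edgeFinset
      (fun e => ∀ v ∈ e, v ∈ Finset.univ \ K)]
    have hz : ∑ e ∈ G.edgeFinset.filter (fun e => ¬ ∀ v ∈ e, v ∈ Finset.univ \ K),
        (A e).re = 0 := by
      apply Finset.sum_eq_zero
      intro e he
      rw [Finset.mem_filter] at he
      obtain ⟨heE, hnot⟩ := he
      push_neg at hnot
      obtain ⟨v, hve, hv⟩ := hnot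
      have hvK : pauliX v ψ = ψ := by
        simp only [Finset.mem_sdiff, Finset.mem_univ, true_and, hK,
          Finset.mem_filter, not_not, not_and] at hv
        exact hv
      induction e using Sym2.inductionOn with
      | hf a b =>
        have hadj : G.Adj a b := by rwa [SimpleGraph.mem_edgeFinset, SimpleGraph.mem_edgeSet] at heE
        have hab : a ≠ b := hadj.ne
        rcases Sym2.mem_iff.mp hve with rfl | rfl
        · show (∑ x : Fin N → Fin 2, (starRingEnd ℂ) (ψ x) * edgeZZ ψ x s(v, b)).re = 0
          rw [edge_zero ψ v b hab hvK]; simp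
        · show (∑ x : Fin N → Fin 2, (starRingEnd ℂ) (ψ x) * edgeZZ ψ x s(a, v)).re = 0
          rw [show s(a, v) = s(v, a) from Sym2.eq_swap, edge_zero ψ v a (Ne.symm hab) hvK]
          simp
    rw [hz, add_zero]
    have hone : ∀ e ∈ G.edgeFinset, (A e).re ≤ 1 := by
      intro e _
      induction e using Sym2.inductionOn with
      | hf a b =>
        rw [hA]
        have : (∑ x : Fin N → Fin 2, (starRingEnd ℂ) (ψ x) * edgeZZ ψ x s(a, b)).re
            = ∑ x : Fin N → Fin 2, ((-1 : ℝ) ^ ((x a).val + (x b).val) * Complex.normSq (ψ x)) := by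
          rw [Complex.re_sum]
          apply Finset.sum_congr rfl
          intro x _
          simp only [edgeZZ, Sym2.lift_mk]
          have : (starRingEnd ℂ) (ψ x) * ((-1 : ℂ) ^ ((x a).val + (x b).val) * ψ x)
              = (((-1 : ℝ) ^ ((x a).val + (x b).val) : ℝ) : ℂ) * ((Complex.normSq (ψ x) : ℝ) : ℂ) := by
            rw [Complex.normSq_eq_conj_mul_self]
            push_cast
            ring
          rw [this, ← Complex.ofReal_mul, Complex.ofReal_re]
        rw [this]
        calc ∑ x : Fin N → Fin 2, ((-1 : ℝ) ^ ((x a).val + (x b).val) * Complex.normSq (ψ x))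
            ≤ ∑ x : Fin N → Fin 2, Complex.normSq (ψ x) := by
              apply Finset.sum_le_sum
              intro x _
              have h1 : (-1 : ℝ) ^ ((x a).val + (x b).val) ≤ 1 := by
                rcases Nat.even_or_odd ((x a).val + (x b).val) with h | h
                · rw [h.neg_one_pow]
                · rw [h.neg_one_pow]; norm_num
              have h2 : 0 ≤ Complex.normSq (ψ x) := Complex.normSq_nonneg _
              nlinarith
          _ = 1 := hnorm
    calc ∑ e ∈ G.edgeFinset.filter (fun e => ∀ v ∈ e, v ∈ Finset.univ \ K), (A e).re
        ≤ ∑ e ∈ G.edgeFinset.filter (fun e => ∀ v ∈ e, v ∈ Finset.univ \ K), (1 : ℝ) := by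
          apply Finset.sum_le_sum
          intro e he
          exact hone e (Finset.mem_filter.mp he).1
      _ = ((inducedEdges G (Finset.univ \ K)).card : ℝ) := by
          rw [Finset.sum_const, nsmul_eq_mul, mul_one]
          norm_cast
          unfold inducedEdges
          congr 1
          ext e
          simp [Finset.mem_filter]
  -- bound on X sums
  have hX : ∑ i : Fin N, (B i).re ≤ (K.card : ℝ) := by
    rw [← Finset.sum_filter_add_sum_filter_not Finset.univ (fun i => pauliX i ψ = ψ)]
    have h1 : ∑ i ∈ Finset.univ.filter (fun i => pauliX i ψ = ψ), (B i).re = (K.card : ℝ) := by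
      have hval : ∀ i ∈ Finset.univ.filter (fun i => pauliX i ψ = ψ), (B i).re = 1 := by
        intro i hi
        rw [Finset.mem_filter] at hi
        show (qInner ψ (pauliX i ψ)).re = 1
        rw [hi.2, hunit, Complex.one_re]
      rw [Finset.sum_congr rfl hval, Finset.sum_const, nsmul_eq_mul, mul_one]
    have h2 : ∑ i ∈ Finset.univ.filter (fun i => ¬ pauliX i ψ = ψ), (B i).re ≤ 0 := by
      apply Finset.sum_nonpos
      intro i hi
      rw [Finset.mem_filter] at hi
      rcases hstab i with h | h
      · exact absurd h hi.2
      · exact h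
    linarith
  -- conclude
  rw [key]
  have hre : (-(∑ e ∈ G.edgeFinset, A e) - (g : ℂ) * ∑ i : Fin N, B i).re
      = -(∑ e ∈ G.edgeFinset, (A e).re) - g * ∑ i : Fin N, (B i).re := by
    rw [Complex.sub_re, Complex.neg_re, Complex.re_ofReal_mul, Complex.re_sum, Complex.re_sum]
  rw [hre]
  have := mul_le_mul_of_nonneg_left hX hg
  linarith
end
end

section
/- (Weighted version of Lemma 'Part 1'.) Let N ≥ 1, let G be a simple graph on Fin N, let J assign a nonnegative real weight J_{ij} ≥ 0 to each edge {i,j} of G, and let J_i ≥ 0 for each i ∈ Fin N. Let H = -∑_{{i,j} ∈ E_G} J_{ij} Z_iZ_j - ∑_{i ∈ Fin N} J_i X_i. For any finite set V ⊆ Fin N, let φ_V be the product state given by φ_V(x) = (1/√2)^(N - |V|) if x i = 0 for all i ∈ V, and φ_V(x) = 0 otherwise. Then ⟨φ_V, H φ_V⟩ = -∑_{{i,j} ∈ E(V)} J_{ij} - ∑_{i ∉ V} J_i, where E(V) is the set of edges of G with both endpoints in V. -/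
open scoped BigOperators Classical

noncomputable section

/-- The product state `φ_V`: `(1/√2)^(N - |V|)` on bit strings vanishing on `V`, zero elsewhere. -/
def phiV {N : ℕ} (V : Finset (Fin N)) : (Fin N → Fin 2) → ℂ :=
  fun x => if ∀ i ∈ V, x i = 0 then (((1 / Real.sqrt 2) ^ (N - V.card) : ℝ) : ℂ) else 0

/-- The weighted Ising Hamiltonian `H = -∑_{{i,j} ∈ E_G} J_{ij} Z_iZ_j - ∑_i J_i X_i`. -/
def weightedH {N : ℕ} (G : SimpleGraph (Fin N)) [DecidableRel G.Adj]
    (J : Sym2 (Fin N) → ℝ) (Ji : Fin N → ℝ) (ψ : (Fin N → Fin 2) → ℂ) :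
    (Fin N → Fin 2) → ℂ :=
  fun x => -(∑ e ∈ G.edgeFinset, (J e : ℂ) * edgeZZ ψ x e)
    - ∑ i : Fin N, (Ji i : ℂ) * pauliX i ψ x

section Aux

variable {N : ℕ}

lemma fin2_one_sub_ne : ∀ b : Fin 2, 1 - b ≠ b := by decide

lemma fin2_one_sub_one_sub : ∀ b : Fin 2, 1 - (1 - b) = b := by decide

lemma neg_one_pow_flip (m : ℕ) (b : Fin 2) :
    (-1 : ℂ) ^ (m + ((1 - b) : Fin 2).val) = -(-1 : ℂ) ^ (m + b.val) := by
  fin_cases b <;> simp [pow_succ]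

lemma S_card_aux (V : Finset (Fin N)) :
    (Finset.univ.filter (fun x : Fin N → Fin 2 => ∀ i ∈ V, x i = 0)).card
      = 2 ^ (N - V.card) := by
  have h : (Finset.univ.filter (fun x : Fin N → Fin 2 => ∀ i ∈ V, x i = 0))
      = Fintype.piFinset (fun i => if i ∈ V then ({0} : Finset (Fin 2)) else Finset.univ) := by
    ext x
    simp only [Finset.mem_filter, Finset.mem_univ, true_and, Fintype.mem_piFinset]
    constructor
    · intro hx i
      by_cases hi : i ∈ V <;> simp [hi, hx i]
    · intro hx i hi
      simpa [hi] using hx i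
  rw [h, Fintype.card_piFinset]
  have h2 : ∀ i : Fin N,
      (if i ∈ V then ({0} : Finset (Fin 2)) else Finset.univ).card = if i ∈ V then 1 else 2 := by
    intro i; split <;> simp
  simp_rw [h2]
  rw [Finset.prod_ite, Finset.prod_const, Finset.prod_const, one_pow, one_mul]
  congr 1
  have : Finset.univ.filter (fun i => ¬ i ∈ V) = Vᶜ := by
    ext i; simp
  rw [this, Finset.card_compl]
  simp

lemma sqrt_norm (k : ℕ) :
    ((2 : ℝ) ^ k) * ((1 / Real.sqrt 2) ^ k * (1 / Real.sqrt 2) ^ k) = 1 := by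
  have h : (2 : ℝ) * (1 / Real.sqrt 2 * (1 / Real.sqrt 2)) = 1 := by
    rw [div_mul_div_comm, one_mul, Real.mul_self_sqrt (by norm_num)]
    norm_num
  calc ((2 : ℝ) ^ k) * ((1 / Real.sqrt 2) ^ k * (1 / Real.sqrt 2) ^ k)
      = (2 * (1 / Real.sqrt 2 * (1 / Real.sqrt 2))) ^ k := by rw [mul_pow, mul_pow]
    _ = 1 := by rw [h, one_pow]

lemma const_sum (V : Finset (Fin N)) :
    ∑ x : Fin N → Fin 2, (if ∀ i ∈ V, x i = 0 then
      (starRingEnd ℂ) (((1 / Real.sqrt 2) ^ (N - V.card) : ℝ) : ℂ)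
        * (((1 / Real.sqrt 2) ^ (N - V.card) : ℝ) : ℂ) else 0) = 1 := by
  rw [← Finset.sum_filter, Finset.sum_const, S_card_aux, nsmul_eq_mul,
    Complex.conj_ofReal]
  exact_mod_cast sqrt_norm (N - V.card)

lemma phiV_update (V : Finset (Fin N)) {j : Fin N} (hj : j ∉ V) (x : Fin N → Fin 2)
    (b : Fin 2) : phiV V (Function.update x j b) = phiV V x := by
  have h : (∀ v ∈ V, Function.update x j b v = 0) ↔ (∀ v ∈ V, x v = 0) := by
    apply forall₂_congr
    intro v hv
    rw [Function.update_of_ne (by rintro rfl; exact hj hv)]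
  simp only [phiV, h]

lemma zz_zero (V : Finset (Fin N)) {i j : Fin N} (hij : i ≠ j) (hj : j ∉ V) :
    ∑ x : Fin N → Fin 2, (starRingEnd ℂ) (phiV V x) *
      ((-1 : ℂ) ^ ((x i).val + (x j).val) * phiV V x) = 0 := by
  apply Finset.sum_ninvolution (g := fun x => Function.update x j (1 - x j))
  · intro x
    have h1 : phiV V (Function.update x j (1 - x j)) = phiV V x := phiV_update V hj x _
    have h2 : Function.update x j (1 - x j) i = x i := Function.update_of_ne hij _ _
    have h3 : Function.update x j (1 - x j) j = 1 - x j := Function.update_self _ _ _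
    rw [h1, h2, h3, neg_one_pow_flip]
    ring
  · intro x _ heq
    have := congrFun heq j
    rw [Function.update_self] at this
    exact fin2_one_sub_ne _ this
  · intro x; exact Finset.mem_univ _
  · intro x
    funext v
    rcases eq_or_ne v j with rfl | hv
    · simp [Function.update_self, fin2_one_sub_one_sub]
    · simp [Function.update_of_ne hv]

lemma zz_sum (V : Finset (Fin N)) {i j : Fin N} (hij : i ≠ j) :
    ∑ x : Fin N → Fin 2, (starRingEnd ℂ) (phiV V x) *
      ((-1 : ℂ) ^ ((x i).val + (x j).val) * phiV V x)
      = if i ∈ V ∧ j ∈ V then 1 else 0 := by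
  by_cases hV : i ∈ V ∧ j ∈ V
  · rw [if_pos hV, ← const_sum V]
    apply Finset.sum_congr rfl
    intro x _
    by_cases hx : ∀ v ∈ V, x v = 0
    · have hxi : x i = 0 := hx i hV.1
      have hxj : x j = 0 := hx j hV.2
      simp only [phiV, if_pos hx, hxi, hxj]
      norm_num
    · simp only [phiV, if_neg hx, map_zero, zero_mul, mul_zero]
  · rw [if_neg hV]
    rcases not_and_or.mp hV with hi | hj
    · have := zz_zero V hij.symm hi
      simpa [Nat.add_comm] using this
    · exact zz_zero V hij hj

lemma x_sum (V : Finset (Fin N)) (i : Fin N) :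
    ∑ x : Fin N → Fin 2, (starRingEnd ℂ) (phiV V x) *
      phiV V (Function.update x i (1 - x i)) = if i ∈ V then 0 else 1 := by
  by_cases hi : i ∈ V
  · rw [if_pos hi]
    refine Finset.sum_eq_zero fun x _ => ?_
    by_cases hx : ∀ v ∈ V, x v = 0
    · have hxi : x i = 0 := hx i hi
      have hne : ¬ ∀ v ∈ V, Function.update x i (1 - x i) v = 0 := by
        intro h
        have := h i hi
        rw [Function.update_self, hxi] at this
        exact absurd this (by decide)
      simp only [phiV, if_neg hne, mul_zero]
    · simp only [phiV, if_neg hx, map_zero, zero_mul]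
  · rw [if_neg hi, ← const_sum V]
    apply Finset.sum_congr rfl
    intro x _
    rw [phiV_update V hi x _]
    by_cases hx : ∀ v ∈ V, x v = 0
    · simp only [phiV, if_pos hx]
    · simp only [phiV, if_neg hx, map_zero, zero_mul]

end Aux

/-- Weighted version of Lemma "Part 1":
`⟨φ_V, H φ_V⟩ = -∑_{{i,j} ∈ E(V)} J_{ij} - ∑_{i ∉ V} J_i`. -/
theorem stmt_12 {N : ℕ} (hN : 1 ≤ N) (G : SimpleGraph (Fin N)) [DecidableRel G.Adj]
    (J : Sym2 (Fin N) → ℝ) (hJ : ∀ e ∈ G.edgeFinset, 0 ≤ J e)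
    (Ji : Fin N → ℝ) (hJi : ∀ i, 0 ≤ Ji i) (V : Finset (Fin N)) :
    qInner (phiV V) (weightedH G J Ji (phiV V)) =
      -(∑ e ∈ inducedEdges G V, (J e : ℂ)) - ∑ i ∈ Finset.univ \ V, (Ji i : ℂ) := by
  unfold qInner weightedH
  simp only [mul_sub, mul_neg, Finset.mul_sum]
  rw [Finset.sum_sub_distrib, Finset.sum_neg_distrib, Finset.sum_comm,
    Finset.sum_comm (s := (Finset.univ : Finset (Fin N → Fin 2)))]
  have hedge : ∀ e ∈ G.edgeFinset,
      (∑ x : Fin N → Fin 2, (starRingEnd ℂ) (phiV V x) * ((J e : ℂ) * edgeZZ (phiV V) x e))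
        = if ∀ v ∈ e, v ∈ V then (J e : ℂ) else 0 := by
    intro e he
    induction e using Sym2.inductionOn with
    | hf i j =>
      have hij : i ≠ j := by
        have hadj : G.Adj i j := by
          rwa [SimpleGraph.mem_edgeFinset, SimpleGraph.mem_edgeSet] at he
        exact hadj.ne
      have hcond : (∀ v ∈ (s(i, j) : Sym2 (Fin N)), v ∈ V) ↔ (i ∈ V ∧ j ∈ V) := by
        constructor
        · intro h; exact ⟨h i (Sym2.mem_mk_left i j), h j (Sym2.mem_mk_right i j)⟩
        · rintro ⟨h1, h2⟩ v hv
          rcases Sym2.mem_iff.mp hv with rfl | rfl <;> assumption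
      simp only [edgeZZ, Sym2.lift_mk]
      have hre : ∀ x : Fin N → Fin 2, (starRingEnd ℂ) (phiV V x) *
          ((J s(i, j) : ℂ) * ((-1 : ℂ) ^ ((x i).val + (x j).val) * phiV V x))
          = (J s(i, j) : ℂ) * ((starRingEnd ℂ) (phiV V x) *
            ((-1 : ℂ) ^ ((x i).val + (x j).val) * phiV V x)) := fun x => by ring
      rw [Finset.sum_congr rfl (fun x _ => hre x), ← Finset.mul_sum, zz_sum V hij,
        if_congr hcond rfl rfl, mul_ite, mul_one, mul_zero]
  have hvert : ∀ i : Fin N,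
      (∑ x : Fin N → Fin 2, (starRingEnd ℂ) (phiV V x) * ((Ji i : ℂ) * pauliX i (phiV V) x))
        = if i ∈ V then 0 else (Ji i : ℂ) := by
    intro i
    have hre : ∀ x : Fin N → Fin 2, (starRingEnd ℂ) (phiV V x) *
        ((Ji i : ℂ) * pauliX i (phiV V) x)
        = (Ji i : ℂ) * ((starRingEnd ℂ) (phiV V x) *
          phiV V (Function.update x i (1 - x i))) := fun x => by
      simp only [pauliX]; ring
    rw [Finset.sum_congr rfl (fun x _ => hre x), ← Finset.mul_sum, x_sum V i]
    split <;> simp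
  rw [Finset.sum_congr rfl hedge, Finset.sum_congr rfl (fun i _ => hvert i)]
  congr 1
  · rw [← Finset.sum_filter]
    congr 1
    unfold inducedEdges
    congr
  · have h : Finset.univ \ V = Finset.univ.filter (fun i => i ∉ V) := by
      ext i; simp
    rw [h, Finset.sum_filter]
    apply Finset.sum_congr rfl
    intro i _
    split <;> simp_all
end
end

section
/- (Corollary on two-segmented graphs, optimal value formula.) Let N ≥ 1, let G be a simple graph on Fin N with edge function ℰ, and let g ≥ 0 be real. Suppose G is two-segmented, i.e., ℰ(n)/n ≤ ℰ(N)/N for all integers n with 0 < n < N. Then: if g ≤ ℰ(N)/N, then min_{0 ≤ n ≤ N} (-ℰ(n) - g·(N - n)) = -ℰ(N); and if g ≥ ℰ(N)/N, then min_{0 ≤ n ≤ N} (-ℰ(n) - g·(N - n)) = -g·N. -/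
open scoped BigOperators Classical

noncomputable section

/-- The edge function `ℰ(n) = max_{S ⊆ Fin N, |S| ≤ n} |E(S)|`. -/
def edgeFun {N : ℕ} (G : SimpleGraph (Fin N)) [DecidableRel G.Adj] (n : ℕ) : ℕ :=
  (Finset.univ.filter (fun S : Finset (Fin N) => S.card ≤ n)).sup
    (fun S => (inducedEdges G S).card)

lemma edgeFun_zero' {N : ℕ} (G : SimpleGraph (Fin N)) [DecidableRel G.Adj] :
    edgeFun G 0 = 0 := by
  apply Nat.le_antisymm _ (Nat.zero_le _)
  apply Finset.sup_le
  intro S hS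
  simp only [Finset.mem_filter, Nat.le_zero, Finset.card_eq_zero] at hS
  have : inducedEdges G S = ∅ := by
    rw [Finset.eq_empty_iff_forall_notMem]
    intro e he
    simp only [inducedEdges, Finset.mem_filter] at he
    obtain ⟨_, he⟩ := he
    revert he
    induction e with
    | h a b =>
      intro h
      have := h a (Sym2.mem_mk_left a b)
      rw [hS.2] at this
      exact absurd this (Finset.notMem_empty a)
  rw [this]
  simp

/-- Corollary on two-segmented graphs (optimal value formula): if `ℰ(n)/n ≤ ℰ(N)/N` for all
`0 < n < N`, then the minimum of `-ℰ(n) - g·(N - n)` over `0 ≤ n ≤ N` is `-ℰ(N)` when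
`g ≤ ℰ(N)/N` and `-g·N` when `g ≥ ℰ(N)/N`. -/
theorem stmt_18 {N : ℕ} (hN : 1 ≤ N) (G : SimpleGraph (Fin N)) [DecidableRel G.Adj]
    (g : ℝ) (hg : 0 ≤ g)
    (hts : ∀ n : ℕ, 0 < n → n < N →
      (edgeFun G n : ℝ) / (n : ℝ) ≤ (edgeFun G N : ℝ) / (N : ℝ)) :
    (g ≤ (edgeFun G N : ℝ) / (N : ℝ) →
      Finset.inf' (Finset.range (N + 1)) ⟨0, Finset.mem_range.mpr (Nat.succ_pos N)⟩
          (fun n => -((edgeFun G n : ℝ)) - g * ((N : ℝ) - (n : ℝ))) =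
        -((edgeFun G N : ℝ))) ∧
    ((edgeFun G N : ℝ) / (N : ℝ) ≤ g →
      Finset.inf' (Finset.range (N + 1)) ⟨0, Finset.mem_range.mpr (Nat.succ_pos N)⟩
          (fun n => -((edgeFun G n : ℝ)) - g * ((N : ℝ) - (n : ℝ))) =
        -(g * (N : ℝ))) := by
  have hNpos : (0:ℝ) < N := by exact_mod_cast hN
  have hE0 : (edgeFun G 0 : ℝ) = 0 := by rw [edgeFun_zero']; simp
  have hNmem : N ∈ Finset.range (N+1) := Finset.mem_range.mpr (Nat.lt_succ_self N)
  have h0mem : 0 ∈ Finset.range (N+1) := Finset.mem_range.mpr (Nat.succ_pos N)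
  constructor
  · intro hg1
    apply le_antisymm
    · have := Finset.inf'_le
        (fun n : ℕ => -((edgeFun G n : ℝ)) - g * ((N : ℝ) - (n : ℝ))) hNmem
      simpa using this
    · apply Finset.le_inf'
      intro n hn
      rw [Finset.mem_range, Nat.lt_succ_iff] at hn
      rcases Nat.eq_zero_or_pos n with h0 | hpos
      · subst h0
        simp only [hE0, Nat.cast_zero, sub_zero, neg_zero, zero_sub]
        nlinarith [mul_le_mul_of_nonneg_right hg1 hNpos.le,
          div_mul_cancel₀ (edgeFun G N : ℝ) hNpos.ne']
      · rcases eq_or_lt_of_le hn with hEq | hlt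
        · subst hEq
          simp
        · have h1 := hts n hpos hlt
          have hnpos : (0:ℝ) < n := by exact_mod_cast hpos
          have h2 : (edgeFun G n : ℝ) ≤ (n:ℝ) * ((edgeFun G N : ℝ)/N) := by
            rw [div_le_div_iff₀ hnpos hNpos] at h1
            rw [mul_div_assoc'] at *
            rw [le_div_iff₀ hNpos]
            linarith
          have h3 : (n:ℝ) ≤ N := by exact_mod_cast hn
          have h4 : (edgeFun G N : ℝ)/N * N = edgeFun G N :=
            div_mul_cancel₀ _ hNpos.ne'
          nlinarith [mul_le_mul_of_nonneg_right hg1 (sub_nonneg.mpr h3)]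
  · intro hg2
    apply le_antisymm
    · have := Finset.inf'_le
        (fun n : ℕ => -((edgeFun G n : ℝ)) - g * ((N : ℝ) - (n : ℝ))) h0mem
      simp only [hE0, Nat.cast_zero, sub_zero, neg_zero, zero_sub] at this
      linarith
    · apply Finset.le_inf'
      intro n hn
      rw [Finset.mem_range, Nat.lt_succ_iff] at hn
      rcases Nat.eq_zero_or_pos n with h0 | hpos
      · subst h0
        simp [hE0]
      · have hnpos : (0:ℝ) < n := by exact_mod_cast hpos
        have hgn : (edgeFun G n : ℝ) ≤ g * n := by
          rcases eq_or_lt_of_le hn with hEq | hlt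
          · subst hEq
            rw [div_le_iff₀ hNpos] at hg2
            linarith
          · have h1 := (hts n hpos hlt).trans hg2
            rw [div_le_iff₀ hnpos] at h1
            linarith
        nlinarith
end
end

section
/- (Ground state of the ferromagnetic XXX Heisenberg Hamiltonian is the all-zeros Clifford state.) Let N ≥ 1, let G be a simple graph on Fin N, and let H = -∑_{{i,j} ∈ E_G} (X_iX_j + Y_iY_j + Z_iZ_j). Then for every unit vector ψ (⟨ψ, ψ⟩ = 1), Re⟨ψ, H ψ⟩ ≥ -|E_G|, and equality holds for the all-zeros basis state e₀ defined by e₀(x) = 1 if x i = 0 for all i and e₀(x) = 0 otherwise; i.e., e₀ is a ground state of H with energy -|E_G|. -/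
open scoped BigOperators Classical

noncomputable section

/-- `x` with bits `i` and `j` flipped. -/
def flip2 {N : ℕ} (x : Fin N → Fin 2) (i j : Fin N) : Fin N → Fin 2 :=
  Function.update (Function.update x i (1 - x i)) j (1 - x j)

lemma flip2_comm {N : ℕ} (x : Fin N → Fin 2) (i j : Fin N) : flip2 x i j = flip2 x j i := by
  rcases eq_or_ne i j with h | h
  · subst h; rfl
  · unfold flip2
    exact Function.update_comm h (1 - x i) (1 - x j) x

/-- The Heisenberg term `(X_iX_j + Y_iY_j + Z_iZ_j) ψ` of an edge `e = s(i,j)`, evaluated at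
`x`:  `ψ(x flipped at i,j) - (-1)^(x i + x j) ψ(x flipped at i,j) + (-1)^(x i + x j) ψ(x)`. -/
def heisTerm {N : ℕ} (ψ : (Fin N → Fin 2) → ℂ) (x : Fin N → Fin 2) : Sym2 (Fin N) → ℂ :=
  Sym2.lift ⟨fun i j =>
    ψ (flip2 x i j) - (-1 : ℂ) ^ ((x i).val + (x j).val) * ψ (flip2 x i j)
      + (-1 : ℂ) ^ ((x i).val + (x j).val) * ψ x,
    fun i j => by simp [flip2_comm, Nat.add_comm]⟩

/-- The ferromagnetic XXX Heisenberg Hamiltonian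
`H = -∑_{{i,j} ∈ E_G} (X_iX_j + Y_iY_j + Z_iZ_j)`. -/
def heisH {N : ℕ} (G : SimpleGraph (Fin N)) [DecidableRel G.Adj]
    (ψ : (Fin N → Fin 2) → ℂ) : (Fin N → Fin 2) → ℂ :=
  fun x => -(∑ e ∈ G.edgeFinset, heisTerm ψ x e)

/-- The all-zeros basis state `e₀`. -/
def allZeros {N : ℕ} : (Fin N → Fin 2) → ℂ :=
  fun x => if ∀ i, x i = 0 then 1 else 0

lemma fin2_cases' (a : Fin 2) : a = 0 ∨ a = 1 := by fin_cases a <;> simp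

lemma comp_swap_eq_self' {N : ℕ} (x : Fin N → Fin 2) {i j : Fin N} (h : x i = x j) :
    x ∘ Equiv.swap i j = x := by
  funext k
  simp only [Function.comp_apply, Equiv.swap_apply_def]
  split_ifs with h1 h2 <;> simp_all

lemma comp_swap_eq_flip2' {N : ℕ} (x : Fin N → Fin 2) {i j : Fin N}
    (h : x i ≠ x j) : x ∘ Equiv.swap i j = flip2 x i j := by
  funext k
  rcases fin2_cases' (x i) with hi | hi <;> rcases fin2_cases' (x j) with hj | hj <;>
    simp_all [flip2, Function.comp_apply, Equiv.swap_apply_def, Function.update_apply] <;>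
    split_ifs <;> simp_all

lemma key2' (a b : ℂ) : 2 * ((starRingEnd ℂ) a * b).re ≤ Complex.normSq a + Complex.normSq b := by
  have h := Complex.normSq_nonneg (a - b)
  simp [Complex.normSq_apply, Complex.sub_re, Complex.sub_im, Complex.mul_re,
    Complex.conj_re, Complex.conj_im] at h ⊢
  nlinarith

lemma heisTerm_swap' {N : ℕ} (ψ : (Fin N → Fin 2) → ℂ) (x : Fin N → Fin 2)
    (i j : Fin N) :
    heisTerm ψ x s(i, j) = 2 * ψ (x ∘ Equiv.swap i j) - ψ x := by
  have hlift : heisTerm ψ x s(i, j) =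
      ψ (flip2 x i j) - (-1 : ℂ) ^ ((x i).val + (x j).val) * ψ (flip2 x i j)
        + (-1 : ℂ) ^ ((x i).val + (x j).val) * ψ x := rfl
  rw [hlift]
  by_cases h : x i = x j
  · rw [comp_swap_eq_self' x h]
    have hs : (-1 : ℂ) ^ ((x i).val + (x j).val) = 1 := by
      rcases fin2_cases' (x i) with hi | hi <;> rw [← h] <;> simp_all
    rw [hs]; ring
  · rw [comp_swap_eq_flip2' x h]
    have hs : (-1 : ℂ) ^ ((x i).val + (x j).val) = -1 := by
      rcases fin2_cases' (x i) with hi | hi <;> rcases fin2_cases' (x j) with hj | hj <;> simp_all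
    rw [hs]; ring

lemma edge_bound' {N : ℕ} (ψ : (Fin N → Fin 2) → ℂ)
    (hsum : ∑ x : Fin N → Fin 2, Complex.normSq (ψ x) = 1) (i j : Fin N) :
    (∑ x : Fin N → Fin 2, (starRingEnd ℂ) (ψ x) * heisTerm ψ x s(i, j)).re ≤ 1 := by
  have hswap : ∑ x : Fin N → Fin 2, Complex.normSq (ψ (x ∘ Equiv.swap i j)) = 1 := by
    have h := Equiv.sum_comp (Equiv.arrowCongr (Equiv.swap i j) (Equiv.refl (Fin 2)))
      (fun y => Complex.normSq (ψ y))
    rw [← hsum, ← h]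
    exact Finset.sum_congr rfl fun x _ => rfl
  have hT : ∀ x : Fin N → Fin 2, (starRingEnd ℂ) (ψ x) * heisTerm ψ x s(i, j)
      = 2 * ((starRingEnd ℂ) (ψ x) * ψ (x ∘ Equiv.swap i j)) - (Complex.normSq (ψ x) : ℂ) := by
    intro x
    rw [heisTerm_swap' ψ x i j, Complex.normSq_eq_conj_mul_self]
    ring
  have hre : (∑ x : Fin N → Fin 2, (starRingEnd ℂ) (ψ x) * heisTerm ψ x s(i, j)).re
      = ∑ x : Fin N → Fin 2,
          (2 * ((starRingEnd ℂ) (ψ x) * ψ (x ∘ Equiv.swap i j)).re - Complex.normSq (ψ x)) := by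
    rw [Complex.re_sum]
    refine Finset.sum_congr rfl fun x _ => ?_
    rw [hT x]
    simp [Complex.sub_re, Complex.mul_re]
  rw [hre, Finset.sum_sub_distrib, hsum]
  have hb : ∑ x : Fin N → Fin 2, 2 * ((starRingEnd ℂ) (ψ x) * ψ (x ∘ Equiv.swap i j)).re
      ≤ ∑ x : Fin N → Fin 2, (Complex.normSq (ψ x) + Complex.normSq (ψ (x ∘ Equiv.swap i j))) :=
    Finset.sum_le_sum fun x _ => key2' _ _
  rw [Finset.sum_add_distrib, hsum, hswap] at hb
  linarith

/-- `e₀` is a ground state of the ferromagnetic XXX Heisenberg Hamiltonian,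
with energy `-|E_G|`. -/
theorem stmt_19 {N : ℕ} (hN : 1 ≤ N) (G : SimpleGraph (Fin N)) [DecidableRel G.Adj] :
    (∀ ψ : (Fin N → Fin 2) → ℂ, qInner ψ ψ = 1 →
      -((G.edgeFinset.card : ℝ)) ≤ (qInner ψ (heisH G ψ)).re) ∧
    qInner allZeros (heisH G allZeros) = -((G.edgeFinset.card : ℂ)) := by
  constructor
  · intro ψ hψ
    have hsum : ∑ x : Fin N → Fin 2, Complex.normSq (ψ x) = 1 := by
      have h := hψ
      rw [qInner] at h
      have h2 : (∑ x : Fin N → Fin 2, ((Complex.normSq (ψ x) : ℂ))) = 1 := by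
        rw [← h]
        exact Finset.sum_congr rfl fun x _ => Complex.normSq_eq_conj_mul_self
      rw [← Complex.ofReal_sum] at h2
      exact_mod_cast h2
    have hq : qInner ψ (heisH G ψ)
        = -(∑ e ∈ G.edgeFinset, ∑ x : Fin N → Fin 2, (starRingEnd ℂ) (ψ x) * heisTerm ψ x e) := by
      unfold qInner heisH
      rw [← Finset.sum_comm, ← Finset.sum_neg_distrib]
      refine Finset.sum_congr rfl fun x _ => ?_
      rw [mul_neg, Finset.mul_sum]
    rw [hq, Complex.neg_re, Complex.re_sum]
    have hb : ∑ e ∈ G.edgeFinset,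
        (∑ x : Fin N → Fin 2, (starRingEnd ℂ) (ψ x) * heisTerm ψ x e).re
        ≤ ∑ _e ∈ G.edgeFinset, (1 : ℝ) := by
      refine Finset.sum_le_sum fun e he => ?_
      induction e using Sym2.ind with
      | _ i j => exact edge_bound' ψ hsum i j
    simp only [Finset.sum_const, nsmul_eq_mul, mul_one] at hb
    linarith
  · have hx0 : allZeros (N := N) (fun _ => 0) = 1 := by
      simp [allZeros]
    have hterm : ∀ e ∈ G.edgeFinset, heisTerm (allZeros (N := N)) (fun _ => 0) e = 1 := by
      intro e he
      induction e using Sym2.ind with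
      | _ i j =>
        rw [heisTerm_swap']
        have : (fun _ : Fin N => (0 : Fin 2)) ∘ Equiv.swap i j = fun _ => 0 := rfl
        rw [this, hx0]
        ring
    rw [qInner]
    rw [Finset.sum_eq_single (fun _ : Fin N => (0 : Fin 2))]
    · rw [hx0]
      unfold heisH
      rw [Finset.sum_congr rfl hterm]
      simp
    · intro x _ hx
      have : allZeros x = 0 := by
        rw [allZeros]
        simp only [ite_eq_right_iff, one_ne_zero]
        intro h
        exact hx (funext h)
      rw [this]
      simp
    · intro h
      exact absurd (Finset.mem_univ _) h
end
end
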